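/- Let C be a triangulated category with a weight structure w and an adjacent t-structure t (C^{w≤0} = C^{t≤0}), and suppose t is non-degenerate. Then the heart of t is characterized by C^{t=0} = {M ∈ Obj C : Hom(X, M) = 0 for all X ∈ C^{w=i}, for every i ≠ 0}. -/

import Mathlib

open CategoryTheory Category Limits Pretriangulated

/-- `X` is a retract of `Y`. -/
def IsRetract {C : Type*} [Category C] (X Y : C) : Prop :=
  ∃ (i : X ⟶ Y) (r : Y ⟶ X), i ≫ r = 𝟙 X

/-- A weight structure on a triangulated category `C`, given by the pair of classes
`le = C^{w≤0}` and `ge = C^{w≥0}` (Bondarko). -/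
structure IsWeightStructure (C : Type*) [Category C] [HasZeroObject C] [HasShift C ℤ]
    [Preadditive C] [∀ n : ℤ, (shiftFunctor C n).Additive] [Pretriangulated C]
    (le ge : Set C) : Prop where
  le_retract : ∀ ⦃X Y : C⦄, Y ∈ le → IsRetract X Y → X ∈ le
  ge_retract : ∀ ⦃X Y : C⦄, Y ∈ ge → IsRetract X Y → X ∈ ge
  le_shift : ∀ ⦃X : C⦄, X ∈ le → X⟦(1 : ℤ)⟧ ∈ le
  ge_shift : ∀ ⦃X : C⦄, X ∈ ge → X⟦(-1 : ℤ)⟧ ∈ ge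
  orth : ∀ ⦃X Y : C⦄, X ∈ ge → Y ∈ le → ∀ f : X ⟶ Y⟦(1 : ℤ)⟧, f = 0
  decomp : ∀ M : C, ∃ (A B : C) (_ : A ∈ le) (_ : B ∈ ge)
    (f : M ⟶ A) (g : A ⟶ B) (h : B ⟶ M⟦(1 : ℤ)⟧), Triangle.mk f g h ∈ distTriang C
/-- A t-structure on a triangulated category `C`, given by the classes
`le = C^{t≤0}` and `ge = C^{t≥0}`. -/
structure IsTStructure (C : Type*) [Category C] [HasZeroObject C] [HasShift C ℤ]
    [Preadditive C] [∀ n : ℤ, (shiftFunctor C n).Additive] [Pretriangulated C]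
    (le ge : Set C) : Prop where
  le_iso : ∀ ⦃X Y : C⦄, Y ∈ le → Nonempty (X ≅ Y) → X ∈ le
  ge_iso : ∀ ⦃X Y : C⦄, Y ∈ ge → Nonempty (X ≅ Y) → X ∈ ge
  le_shift : ∀ ⦃X : C⦄, X ∈ le → X⟦(1 : ℤ)⟧ ∈ le
  ge_shift : ∀ ⦃X : C⦄, X ∈ ge → X⟦(-1 : ℤ)⟧ ∈ ge
  orth : ∀ ⦃X Y : C⦄, X ∈ le → Y⟦(1 : ℤ)⟧ ∈ ge → ∀ f : X ⟶ Y, f = 0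
  decomp : ∀ M : C, ∃ (A B : C) (_ : A ∈ le) (_ : B⟦(1 : ℤ)⟧ ∈ ge)
    (f : A ⟶ M) (g : M ⟶ B) (h : B ⟶ A⟦(1 : ℤ)⟧), Triangle.mk f g h ∈ distTriang C

namespace HeartAux

variable {C : Type*} [Category C] [HasZeroObject C] [HasShift C ℤ]
    [Preadditive C] [∀ n : ℤ, (shiftFunctor C n).Additive] [Pretriangulated C]

/-- Composition of shifts, as an isomorphism. -/
noncomputable def sIso (X : C) (a b c : ℤ) (h : a + b = c) :
    (X⟦a⟧)⟦b⟧ ≅ X⟦c⟧ :=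
  ((shiftFunctorAdd' C a b c h).app X).symm

/-- Zero shift, as an isomorphism. -/
noncomputable def sIso0 (X : C) : X⟦(0 : ℤ)⟧ ≅ X :=
  (shiftFunctorZero C ℤ).app X

section Mem

variable {S : Set C} (hiso : ∀ ⦃X Y : C⦄, Y ∈ S → (X ≅ Y) → X ∈ S)

include hiso in
lemma mem_up (hsh : ∀ ⦃X : C⦄, X ∈ S → X⟦(1 : ℤ)⟧ ∈ S) {X : C} {a b : ℤ}
    (h : X⟦a⟧ ∈ S) (hab : a ≤ b) : X⟦b⟧ ∈ S := by
  obtain ⟨n, rfl⟩ := Int.le.dest hab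
  induction n with
  | zero => simpa using h
  | succ n ih =>
    exact hiso (hsh (ih (by omega)))
      (sIso X (a + (n : ℤ)) 1 (a + ((n : ℕ) + 1 : ℕ)) (by push_cast; ring)).symm

include hiso in
lemma mem_down (hsh : ∀ ⦃X : C⦄, X ∈ S → X⟦(-1 : ℤ)⟧ ∈ S) {X : C} {a b : ℤ}
    (h : X⟦a⟧ ∈ S) (hab : b ≤ a) : X⟦b⟧ ∈ S := by
  obtain ⟨n, rfl⟩ := Int.le.dest hab
  induction n with
  | zero => simpa using h
  | succ n ih =>
    refine ih (hiso (hsh h)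
      (sIso X (b + ((n : ℕ) + 1 : ℕ)) (-1) (b + (n : ℤ)) (by push_cast; ring)).symm) (by omega)

end Mem

variable {wle wge tle tge : Set C}

lemma wle_iso (w : IsWeightStructure C wle wge) : ∀ ⦃X Y : C⦄, Y ∈ wle → (X ≅ Y) → X ∈ wle :=
  fun _ _ h e => w.le_retract h ⟨e.hom, e.inv, e.hom_inv_id⟩

lemma wge_iso (w : IsWeightStructure C wle wge) : ∀ ⦃X Y : C⦄, Y ∈ wge → (X ≅ Y) → X ∈ wge :=
  fun _ _ h e => w.ge_retract h ⟨e.hom, e.inv, e.hom_inv_id⟩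

lemma tle_iso (t : IsTStructure C tle tge) : ∀ ⦃X Y : C⦄, Y ∈ tle → (X ≅ Y) → X ∈ tle :=
  fun _ _ h e => t.le_iso h ⟨e⟩

lemma tge_iso (t : IsTStructure C tle tge) : ∀ ⦃X Y : C⦄, Y ∈ tge → (X ≅ Y) → X ∈ tge :=
  fun _ _ h e => t.ge_iso h ⟨e⟩

/-- Orthogonality for the weight structure: no maps from weights `≥ a` to weights `≤ b < a`. -/
lemma w_orth (w : IsWeightStructure C wle wge) {X Y : C} {a b : ℤ}
    (hX : X⟦a⟧ ∈ wge) (hY : Y⟦b⟧ ∈ wle) (hab : b < a) (f : X ⟶ Y) : f = 0 := by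
  have hY' : Y⟦a - 1⟧ ∈ wle := mem_up (wle_iso w) w.le_shift hY (by omega)
  have h0 := w.orth hX hY' ((shiftFunctor C a).map f ≫ (sIso Y (a - 1) 1 a (by ring)).inv)
  apply (shiftFunctor C a).map_injective
  rw [Functor.map_zero]
  calc (shiftFunctor C a).map f
      = ((shiftFunctor C a).map f ≫ (sIso Y (a - 1) 1 a (by ring)).inv) ≫
          (sIso Y (a - 1) 1 a (by ring)).hom := by simp
    _ = 0 := by rw [h0, zero_comp]

/-- Orthogonality for the t-structure: no maps from `C^{t≤a}` to `C^{t≥b}` when `a < b`. -/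
lemma t_orth (t : IsTStructure C tle tge) {X Y : C} {a b : ℤ}
    (hX : X⟦a⟧ ∈ tle) (hY : Y⟦b⟧ ∈ tge) (hab : a < b) (f : X ⟶ Y) : f = 0 := by
  have hY' : Y⟦a + 1⟧ ∈ tge := mem_down (tge_iso t) t.ge_shift hY (by omega)
  have hYY : (Y⟦a⟧)⟦(1 : ℤ)⟧ ∈ tge := t.ge_iso hY' ⟨sIso Y a 1 (a + 1) rfl⟩
  have h0 := t.orth hX hYY ((shiftFunctor C a).map f)
  apply (shiftFunctor C a).map_injective
  rw [Functor.map_zero]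
  exact h0

/-- If `Y` receives no nonzero map from `tle`, then `Y⟦1⟧ ∈ tge`. -/
lemma lemT (t : IsTStructure C tle tge) {Y : C}
    (h : ∀ X ∈ tle, ∀ f : X ⟶ Y, f = 0) : Y⟦(1 : ℤ)⟧ ∈ tge := by
  obtain ⟨A, B, hA, hB, f, g, hh, hT⟩ := t.decomp Y
  have hf : f = 0 := h A hA f
  obtain ⟨k, hk⟩ := Triangle.coyoneda_exact₂ _
    (inv_rot_of_distTriang _ hT) (𝟙 A) (by simp [Triangle.invRotate, hf]; exact Limits.comp_zero)
  have hk0 : k = 0 := by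
    refine t_orth t (t.le_iso hA ⟨sIso0 A⟩) (Y := (B⟦(-1 : ℤ)⟧))
      (t.ge_iso hB ⟨sIso B (-1) 2 1 (by ring)⟩) (a := 0) (b := 2) (by omega) k
  rw [hk0, zero_comp] at hk
  have hzA : IsZero A := by
    rw [IsZero.iff_id_eq_zero]; exact hk
  have hiso2 : IsIso (Triangle.mk f g hh).mor₂ :=
    (Triangle.isZero₁_iff_isIso₂ _ hT).1 hzA
  exact t.ge_iso hB ⟨(shiftFunctor C (1 : ℤ)).mapIso (@asIso _ _ _ _ (Triangle.mk f g hh).mor₂ hiso2)⟩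

/-- If `Y` has no nonzero map to `C^{t≥1}`, then `Y ∈ tle`. -/
lemma lemT' (t : IsTStructure C tle tge) {Y : C}
    (h : ∀ Z : C, Z⟦(1 : ℤ)⟧ ∈ tge → ∀ f : Y ⟶ Z, f = 0) : Y ∈ tle := by
  obtain ⟨A, B, hA, hB, f, g, hh, hT⟩ := t.decomp Y
  have hg : g = 0 := h B hB g
  obtain ⟨k, hk⟩ := Triangle.yoneda_exact₂ _
    (rot_of_distTriang _ hT) (𝟙 B) (by simp [Triangle.rotate, hg]; exact Limits.zero_comp)
  have hk0 : k = 0 := by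
    refine t_orth t (X := A⟦(1 : ℤ)⟧) (t.le_iso (t.le_shift hA) ⟨sIso0 _⟩)
      hB (a := 0) (b := 1) (by omega) k
  rw [hk0, comp_zero] at hk
  have hzB : IsZero B := by
    rw [IsZero.iff_id_eq_zero]; exact hk
  have hiso1 : IsIso (Triangle.mk f g hh).mor₁ :=
    (Triangle.isZero₃_iff_isIso₁ _ hT).1 hzB
  exact t.le_iso hA ⟨(asIso (Triangle.mk f g hh).mor₁).symm⟩

/-- Recognition of `wle` via vanishing against `wge`. -/
lemma wle_char (w : IsWeightStructure C wle wge) {Y : C}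
    (h : ∀ X ∈ wge, ∀ f : X ⟶ Y⟦(1 : ℤ)⟧, f = 0) : Y ∈ wle := by
  obtain ⟨A, B, hA, hB, f, g, hh, hT⟩ := w.decomp Y
  have hh0 : hh = 0 := h B hB hh
  obtain ⟨r, hr⟩ := Triangle.yoneda_exact₂ _
    (inv_rot_of_distTriang _ hT) (𝟙 Y) (by simp [Triangle.invRotate, hh0]; erw [Functor.map_zero]; simp; exact Limits.zero_comp)
  exact w.le_retract hA ⟨f, r, hr.symm⟩

/-- `wle` is closed under extensions. -/
lemma wle_ext (w : IsWeightStructure C wle wge) {T : Triangle C} (hT : T ∈ distTriang C)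
    (h₁ : T.obj₁ ∈ wle) (h₃ : T.obj₃ ∈ wle) : T.obj₂ ∈ wle := by
  apply wle_char w
  intro X hX f
  have hTS : (Triangle.shiftFunctor C 1).obj T ∈ distTriang C :=
    Triangle.shift_distinguished T hT 1
  have h5 : f ≫ ((Triangle.shiftFunctor C 1).obj T).mor₂ = 0 := by
    have : f ≫ (shiftFunctor C (1 : ℤ)).map T.mor₂ = 0 := w.orth hX h₃ _
    change f ≫ ((-1 : ℤˣ) • (shiftFunctor C (1 : ℤ)).map T.mor₂) = 0
    rw [Linear.comp_units_smul, this, smul_zero]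
  obtain ⟨k, hk⟩ := Triangle.coyoneda_exact₂ _ hTS f h5
  have hk0 : k = 0 := w.orth hX h₁ k
  rw [hk0, zero_comp] at hk
  exact hk

/-- Splitting off the top weight piece: if `X⟦n⟧ ∈ wle` then there is a distinguished
triangle `P ⟶ X' ⟶ Q` with `X' ≅ X`, `P ∈ C^{w=n}` and `Q ∈ C^{w≤n-1}`. -/
lemma top_split (w : IsWeightStructure C wle wge) (X : C) (n : ℤ) (hX : X⟦n⟧ ∈ wle) :
    ∃ (T : Triangle C) (_ : T ∈ distTriang C) (_ : T.obj₂ ≅ X),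
      (T.obj₁⟦n⟧ ∈ wle ∧ T.obj₁⟦n⟧ ∈ wge) ∧ T.obj₃⟦n - 1⟧ ∈ wle := by
  obtain ⟨A, B, hA, hB, f, g, hh, hT₁⟩ := w.decomp (X⟦n - 1⟧)
  have hX1 : (X⟦n - 1⟧)⟦(1 : ℤ)⟧ ∈ wle :=
    wle_iso w hX (sIso X (n - 1) 1 n (by ring))
  have hBle : B ∈ wle :=
    wle_ext w (rot_of_distTriang _ hT₁) (T := (Triangle.mk f g hh).rotate) hA hX1
  refine ⟨(Triangle.shiftFunctor C (1 - n)).obj (Triangle.mk f g hh).invRotate,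
    Triangle.shift_distinguished _ (inv_rot_of_distTriang _ hT₁) (1 - n),
    sIso X (n - 1) (1 - n) 0 (by ring) ≪≫ sIso0 X, ⟨?_, ?_⟩, ?_⟩
  · exact wle_iso w hBle
      (sIso (B⟦(-1 : ℤ)⟧) (1 - n) n 1 (by ring) ≪≫ sIso B (-1) 1 0 (by ring) ≪≫ sIso0 B)
  · exact wge_iso w hB
      (sIso (B⟦(-1 : ℤ)⟧) (1 - n) n 1 (by ring) ≪≫ sIso B (-1) 1 0 (by ring) ≪≫ sIso0 B)
  · exact wle_iso w hA (sIso A (1 - n) (n - 1) 0 (by ring) ≪≫ sIso0 A)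

end HeartAux

open HeartAux

/-- Let `w` be a weight structure on `C` with an adjacent t-structure `t`
(`C^{w≤0} = C^{t≤0}`), `t` non-degenerate. Then the heart of `t` consists exactly of
those `M` receiving no nonzero morphisms from `C^{w=i}` for every `i ≠ 0`
(where `X ∈ C^{w=i}` iff `X⟦i⟧` lies in the heart of `w`). -/
theorem heart_of_adjacent_tStructure
    {C : Type*} [Category C] [HasZeroObject C] [HasShift C ℤ]
    [Preadditive C] [∀ n : ℤ, (shiftFunctor C n).Additive] [Pretriangulated C]
    (wle wge tle tge : Set C)
    (w : IsWeightStructure C wle wge) (t : IsTStructure C tle tge)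
    (adj : wle = tle)
    (nondeg : (∀ M : C, (∀ n : ℤ, (shiftFunctor C n).obj M ∈ tle) → Limits.IsZero M) ∧
      (∀ M : C, (∀ n : ℤ, (shiftFunctor C n).obj M ∈ tge) → Limits.IsZero M)) :
    ∀ M : C, (M ∈ tle ∧ M ∈ tge) ↔
      (∀ i : ℤ, i ≠ 0 → ∀ X : C,
        (shiftFunctor C i).obj X ∈ wle → (shiftFunctor C i).obj X ∈ wge →
          ∀ f : X ⟶ M, f = 0) := by
  intro M
  constructor
  · rintro ⟨hMle, hMge⟩ i hi X hXle hXge f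
    rcases lt_or_gt_of_ne hi with hneg | hpos
    · refine t_orth t (show X⟦i⟧ ∈ tle by rw [← adj]; exact hXle)
        (Y := M) (b := 0) (t.ge_iso hMge ⟨sIso0 M⟩) (by omega) f
    · have h1 : X⟦(1 : ℤ)⟧ ∈ wge := mem_down (wge_iso w) w.ge_shift hXge (by omega)
      have h2 : M⟦(0 : ℤ)⟧ ∈ wle := wle_iso w (show M ∈ wle by rw [adj]; exact hMle) (sIso0 M)
      exact w_orth w h1 h2 (by omega) f
  · intro H
    -- Part 1 : M ∈ tle
    obtain ⟨A₅, B₅, hA₅, hB₅, f₅, g₅, h₅, hT₅⟩ := t.decomp M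
    have claimC : ∀ k : ℕ, ∀ W : C, W⟦(k : ℤ)⟧ ∈ wle → ∀ f : W ⟶ B₅, f = 0 := by
      intro k
      induction k with
      | zero =>
        intro W hW f
        refine t_orth t (a := 0) (b := 1)
          (show W⟦(0 : ℤ)⟧ ∈ tle by rw [← adj]; simpa using hW) hB₅ (by omega) f
      | succ k ih =>
        intro W hW f
        have hW' : W⟦(k : ℤ) + 1⟧ ∈ wle := by
          have : (((k : ℕ) + 1 : ℕ) : ℤ) = (k : ℤ) + 1 := by push_cast; ring
          rwa [this] at hW
        obtain ⟨T, hTd, e, ⟨hPle, hPge⟩, hQle⟩ := top_split w W ((k : ℤ) + 1) hW'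
        have hfP : (T.mor₁ ≫ e.hom ≫ f) ≫ (Triangle.mk f₅ g₅ h₅).mor₃ = 0 := by
          refine w_orth w (a := (k : ℤ) + 1) (b := 0) hPge
            (wle_iso w (w.le_shift (show A₅ ∈ wle by rw [adj]; exact hA₅)) (sIso0 _))
            (by omega) _
        obtain ⟨φ, hφ⟩ := Triangle.coyoneda_exact₃ _ hT₅ (T.mor₁ ≫ e.hom ≫ f) hfP
        have hφ0 : φ = 0 := H ((k : ℤ) + 1) (by omega) T.obj₁ hPle hPge φ
        rw [hφ0, zero_comp] at hφ
        obtain ⟨u, hu⟩ := Triangle.yoneda_exact₂ T hTd (e.hom ≫ f) (by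
          rw [← assoc]
          rw [assoc]; exact hφ)
        have hu0 : u = 0 := by
          apply ih
          have : ((k : ℤ) + 1) - 1 = (k : ℤ) := by ring
          rwa [this] at hQle
        rw [hu0, comp_zero] at hu
        calc f = e.inv ≫ (e.hom ≫ f) := by simp
          _ = 0 := by rw [hu, comp_zero]
    have claimB : ∀ k : ℕ, B₅⟦(k : ℤ) + 1⟧ ∈ tge := by
      intro k
      induction k with
      | zero => simpa using hB₅
      | succ k ih =>
        have h1 : (B₅⟦(k : ℤ) + 1⟧)⟦(1 : ℤ)⟧ ∈ tge := by
          apply lemT t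
          intro X hX f
          have hW : (X⟦-((k : ℤ) + 1)⟧)⟦(((k : ℕ) + 1 : ℕ) : ℤ)⟧ ∈ wle := by
            refine wle_iso w (show X ∈ wle by rw [adj]; exact hX)
              (sIso X (-((k : ℤ) + 1)) _ 0 (by push_cast; ring) ≪≫ sIso0 X)
          have hg := claimC (k + 1) _ hW
            ((shiftFunctor C (-((k : ℤ) + 1))).map f ≫
              (sIso B₅ ((k : ℤ) + 1) (-((k : ℤ) + 1)) 0 (by ring) ≪≫ sIso0 B₅).hom)
          have hmap : (shiftFunctor C (-((k : ℤ) + 1))).map f = 0 := by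
            have := hg
            calc (shiftFunctor C (-((k : ℤ) + 1))).map f
                = ((shiftFunctor C (-((k : ℤ) + 1))).map f ≫
                    (sIso B₅ ((k : ℤ) + 1) (-((k : ℤ) + 1)) 0 (by ring) ≪≫ sIso0 B₅).hom) ≫
                    (sIso B₅ ((k : ℤ) + 1) (-((k : ℤ) + 1)) 0 (by ring) ≪≫ sIso0 B₅).inv := by
                  simp
              _ = 0 := by rw [this, zero_comp]
          apply (shiftFunctor C (-((k : ℤ) + 1))).map_injective
          rw [Functor.map_zero]
          exact hmap
        refine t.ge_iso h1 ⟨(sIso B₅ ((k : ℤ) + 1) 1 _ (by push_cast; ring)).symm⟩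
    have allB : ∀ n : ℤ, B₅⟦n⟧ ∈ tge := by
      intro n
      by_cases hn : n ≤ 1
      · exact mem_down (tge_iso t) t.ge_shift hB₅ hn
      · push_neg at hn
        have hidx : (((n - 1).toNat : ℤ)) + 1 = n := by omega
        have := claimB (n - 1).toNat
        rwa [hidx] at this
    have hzB : IsZero B₅ := nondeg.2 B₅ allB
    have hg₅ : g₅ = 0 := hzB.eq_zero_of_tgt g₅
    obtain ⟨r, hr⟩ := Triangle.coyoneda_exact₂ _ hT₅ (𝟙 M) (by erw [Category.id_comp]; exact hg₅)
    have hMle : M ∈ tle := by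
      rw [← adj]
      exact w.le_retract (show A₅ ∈ wle by rw [adj]; exact hA₅) ⟨r, f₅, hr.symm⟩
    -- Part 2 : M ∈ tge
    obtain ⟨A', B', hA', hB', f', g', h', hT'⟩ := t.decomp (M⟦(-1 : ℤ)⟧)
    have hT₄ : (Triangle.shiftFunctor C 1).obj (Triangle.mk f' g' h') ∈ distTriang C :=
      Triangle.shift_distinguished _ hT' 1
    set T₄ := (Triangle.shiftFunctor C 1).obj (Triangle.mk f' g' h') with hT₄def
    have hA1 : (A'⟦(1 : ℤ)⟧)⟦(-1 : ℤ)⟧ ∈ tle :=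
      t.le_iso hA' ⟨sIso A' 1 (-1) 0 (by ring) ≪≫ sIso0 A'⟩
    have eM : ((M⟦(-1 : ℤ)⟧)⟦(1 : ℤ)⟧ : C) ≅ M := sIso M (-1) 1 0 (by ring) ≪≫ sIso0 M
    have claimK : ∀ (i : ℤ) (W : C), W⟦i⟧ ∈ wle → W⟦i⟧ ∈ wge →
        ∀ g : W ⟶ A'⟦(1 : ℤ)⟧, g = 0 := by
      intro i W hWle hWge g
      by_cases hi : 0 ≤ i
      · exact w_orth w (a := i) (b := -1) hWge
          (show (A'⟦(1 : ℤ)⟧)⟦(-1 : ℤ)⟧ ∈ wle by rw [adj]; exact hA1) (by omega) g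
      · push_neg at hi
        have hgm : g ≫ T₄.mor₁ = 0 := by
          have h0 : (g ≫ T₄.mor₁) ≫ eM.hom = 0 := by
            refine H i (by omega) W hWle hWge _
          calc (g ≫ T₄.mor₁ : W ⟶ T₄.obj₂) = (show W ⟶ T₄.obj₂ from ((g ≫ T₄.mor₁) ≫ eM.hom) ≫ eM.inv) := by erw [Category.assoc, eM.hom_inv_id, Category.comp_id]
            _ = (0 : W ⟶ T₄.obj₂) := by erw [h0, zero_comp]
        obtain ⟨v, hv⟩ := Triangle.coyoneda_exact₂ _ (inv_rot_of_distTriang _ hT₄) g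
          (by exact hgm)
        have hv0 : v = 0 := by
          refine t_orth t (a := i) (b := 0)
            (show W⟦i⟧ ∈ tle by rw [← adj]; exact hWle)
            (Y := (B'⟦(1 : ℤ)⟧)⟦(-1 : ℤ)⟧) ?_ (by omega) v
          refine t.ge_iso (mem_down (tge_iso t) t.ge_shift hB' (by omega : (0 : ℤ) ≤ 1))
            ⟨sIso0 _ ≪≫ sIso B' 1 (-1) 0 (by ring)⟩
        rw [hv0, zero_comp] at hv
        exact hv
    have claimD : ∀ k : ℕ, (A'⟦(1 : ℤ)⟧)⟦-1 - (k : ℤ)⟧ ∈ tle := by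
      intro k
      induction k with
      | zero => simpa using hA1
      | succ k ih =>
        have hidx : (-1 - (((k : ℕ) + 1 : ℕ) : ℤ)) = (-1 - (k : ℤ)) - 1 := by push_cast; ring
        rw [hidx]
        set m : ℤ := -1 - (k : ℤ) with hm
        apply lemT' t
        intro Z hZ f
        have hN : (Z⟦1 - m⟧)⟦m⟧ ∈ tge := t.ge_iso hZ ⟨sIso Z (1 - m) m 1 (by ring)⟩
        have hAm : (A'⟦(1 : ℤ)⟧)⟦m⟧ ∈ wle := by rw [adj]; exact ih
        obtain ⟨T, hTd, e, ⟨hPle, hPge⟩, hQle⟩ := top_split w (A'⟦(1 : ℤ)⟧) m hAm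
        have eA : (A'⟦(1 : ℤ)⟧ : C) ≅ ((A'⟦(1 : ℤ)⟧)⟦m - 1⟧)⟦1 - m⟧ :=
          (sIso (A'⟦(1 : ℤ)⟧) (m - 1) (1 - m) 0 (by ring) ≪≫ sIso0 _).symm
        have h1 : T.mor₁ ≫ (e.hom ≫ eA.hom ≫ (shiftFunctor C (1 - m)).map f) = 0 := by
          have hK : T.mor₁ ≫ e.hom = 0 := claimK m T.obj₁ hPle hPge _
          rw [show T.mor₁ ≫ (e.hom ≫ eA.hom ≫ (shiftFunctor C (1 - m)).map f) =
            (T.mor₁ ≫ e.hom) ≫ (eA.hom ≫ (shiftFunctor C (1 - m)).map f) by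
              simp only [assoc], hK, zero_comp]
        obtain ⟨u, hu⟩ := Triangle.yoneda_exact₂ T hTd _ h1
        have hu0 : u = 0 := by
          refine t_orth t (a := m - 1) (b := m)
            (show T.obj₃⟦m - 1⟧ ∈ tle by rw [← adj]; exact hQle) hN (by omega) u
        rw [hu0, comp_zero] at hu
        have hf' : (shiftFunctor C (1 - m)).map f = 0 := by
          calc (shiftFunctor C (1 - m)).map f
              = eA.inv ≫ e.inv ≫ (e.hom ≫ eA.hom ≫ (shiftFunctor C (1 - m)).map f) := by
                simp
            _ = 0 := by rw [hu, comp_zero, comp_zero]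
        apply (shiftFunctor C (1 - m)).map_injective
        rw [Functor.map_zero]
        exact hf'
    have allA : ∀ n : ℤ, (A'⟦(1 : ℤ)⟧)⟦n⟧ ∈ tle := by
      intro n
      by_cases hn : -1 ≤ n
      · exact mem_up (tle_iso t) t.le_shift hA1 hn
      · push_neg at hn
        have hidx : (-1 - (((-1 - n).toNat : ℕ) : ℤ)) = n := by omega
        have := claimD (-1 - n).toNat
        rwa [hidx] at this
    have hzA : IsZero (A'⟦(1 : ℤ)⟧) := nondeg.1 _ allA
    have hiso2 : IsIso T₄.mor₂ := (Triangle.isZero₁_iff_isIso₂ T₄ hT₄).1 hzA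
    have hMge : M ∈ tge := t.ge_iso hB' ⟨eM.symm ≪≫ @asIso _ _ _ _ T₄.mor₂ hiso2⟩
    exact ⟨hMle, hMge⟩
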